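/- Let n ≥ 1, N ≥ 1 and c₁,…,c_N ∈ ℝⁿ. Define ζ : [0,2π] → ℝⁿ by ζ(θ) = Σ_{l=1}^N c_l sin(lθ/2) (so that ζ(0) = ζ(2π) = 0), and define ζ̄ : (0,1] × (0,2π) → ℝⁿ by ζ̄(r,θ) = Σ_{l=1}^N r^{l/2} c_l sin(lθ/2). Then the Dirichlet energy of ζ̄ computed in polar coordinates satisfies ∫₀^{2π} ∫₀^1 ( ‖∂_r ζ̄(r,θ)‖² + r^{−2} ‖∂_θ ζ̄(r,θ)‖² ) r dr dθ = (π/2) Σ_{l=1}^N l ‖c_l‖², while ∫₀^{2π} ‖ζ'(θ)‖² dθ = (π/4) Σ_{l=1}^N l² ‖c_l‖². In particular the Dirichlet energy of the extension ζ̄ is at most 2 ∫₀^{2π} ‖ζ'(θ)‖² dθ. -/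

import Mathlib

open Real intervalIntegral



lemma cos_int_int (k : ℤ) : ∫ θ in (0:ℝ)..(2*π), Real.cos ((k:ℝ) * θ / 2)
    = if k = 0 then 2*π else 0 := by
  rcases eq_or_ne k 0 with hk | hk
  · simp [hk]
  · have h : ∀ θ : ℝ, HasDerivAt (fun t => 2/(k:ℝ) * Real.sin ((k:ℝ) * t / 2))
        (Real.cos ((k:ℝ) * θ / 2)) θ := by
      intro θ
      have hk' : (k:ℝ) ≠ 0 := Int.cast_ne_zero.2 hk
      have h1 : HasDerivAt (fun t : ℝ => (k:ℝ) * t / 2) ((k:ℝ)/2) θ := by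
        simpa using ((hasDerivAt_id θ).const_mul ((k:ℝ))).div_const 2
      have h2 := (Real.hasDerivAt_sin ((k:ℝ) * θ / 2)).comp θ h1
      have h3 := h2.const_mul (2/(k:ℝ))
      refine h3.congr_deriv ?_
      field_simp
    rw [intervalIntegral.integral_eq_sub_of_hasDerivAt (fun θ _ => h θ)
      ((Real.continuous_cos.comp (by continuity)).intervalIntegrable 0 (2*π))]
    have : (k:ℝ) * (2*π) / 2 = k * π := by ring
    simp [this, hk, Real.sin_int_mul_pi]

lemma sinsin (l m : ℕ) (hl : 1 ≤ l) (hm : 1 ≤ m) :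
    ∫ θ in (0:ℝ)..(2*π), Real.sin ((l:ℝ)*θ/2) * Real.sin ((m:ℝ)*θ/2)
      = if l = m then π else 0 := by
  have key : ∀ θ : ℝ, Real.sin ((l:ℝ)*θ/2) * Real.sin ((m:ℝ)*θ/2)
      = (Real.cos (((((l:ℤ)-(m:ℤ)):ℤ):ℝ) * θ / 2) - Real.cos (((((l:ℤ)+(m:ℤ)):ℤ):ℝ) * θ / 2)) / 2 := by
    intro θ
    have h1 := Real.cos_sub ((l:ℝ)*θ/2) ((m:ℝ)*θ/2)
    have h2 := Real.cos_add ((l:ℝ)*θ/2) ((m:ℝ)*θ/2)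
    have e1 : ((((l:ℤ)-(m:ℤ)):ℤ):ℝ) * θ / 2 = (l:ℝ)*θ/2 - (m:ℝ)*θ/2 := by push_cast; ring
    have e2 : ((((l:ℤ)+(m:ℤ)):ℤ):ℝ) * θ / 2 = (l:ℝ)*θ/2 + (m:ℝ)*θ/2 := by push_cast; ring
    rw [e1, e2, h1, h2]; ring
  rw [intervalIntegral.integral_congr (fun θ _ => key θ)]
  rw [intervalIntegral.integral_div,
    intervalIntegral.integral_sub
      ((by fun_prop : Continuous fun θ:ℝ => Real.cos (((((l:ℤ)-(m:ℤ)):ℤ):ℝ) * θ / 2)).intervalIntegrable 0 (2*π))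
      ((by fun_prop : Continuous fun θ:ℝ => Real.cos (((((l:ℤ)+(m:ℤ)):ℤ):ℝ) * θ / 2)).intervalIntegrable 0 (2*π)),
    cos_int_int, cos_int_int]
  have hne : (l:ℤ) + (m:ℤ) ≠ 0 := by positivity
  rcases eq_or_ne l m with h | h
  · simp [h, hne, Nat.one_le_iff_ne_zero.mp hm]
  · have : (l:ℤ) - (m:ℤ) ≠ 0 := sub_ne_zero.2 (by exact_mod_cast h)
    simp [h, this, hne]

lemma coscos (l m : ℕ) (hl : 1 ≤ l) (hm : 1 ≤ m) :
    ∫ θ in (0:ℝ)..(2*π), Real.cos ((l:ℝ)*θ/2) * Real.cos ((m:ℝ)*θ/2)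
      = if l = m then π else 0 := by
  have key : ∀ θ : ℝ, Real.cos ((l:ℝ)*θ/2) * Real.cos ((m:ℝ)*θ/2)
      = (Real.cos (((((l:ℤ)-(m:ℤ)):ℤ):ℝ) * θ / 2) + Real.cos (((((l:ℤ)+(m:ℤ)):ℤ):ℝ) * θ / 2)) / 2 := by
    intro θ
    have h1 := Real.cos_sub ((l:ℝ)*θ/2) ((m:ℝ)*θ/2)
    have h2 := Real.cos_add ((l:ℝ)*θ/2) ((m:ℝ)*θ/2)
    have e1 : ((((l:ℤ)-(m:ℤ)):ℤ):ℝ) * θ / 2 = (l:ℝ)*θ/2 - (m:ℝ)*θ/2 := by push_cast; ring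
    have e2 : ((((l:ℤ)+(m:ℤ)):ℤ):ℝ) * θ / 2 = (l:ℝ)*θ/2 + (m:ℝ)*θ/2 := by push_cast; ring
    rw [e1, e2, h1, h2]; ring
  rw [intervalIntegral.integral_congr (fun θ _ => key θ)]
  rw [intervalIntegral.integral_div,
    intervalIntegral.integral_add
      ((by fun_prop : Continuous fun θ:ℝ => Real.cos (((((l:ℤ)-(m:ℤ)):ℤ):ℝ) * θ / 2)).intervalIntegrable 0 (2*π))
      ((by fun_prop : Continuous fun θ:ℝ => Real.cos (((((l:ℤ)+(m:ℤ)):ℤ):ℝ) * θ / 2)).intervalIntegrable 0 (2*π)),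
    cos_int_int, cos_int_int]
  have hne : (l:ℤ) + (m:ℤ) ≠ 0 := by positivity
  rcases eq_or_ne l m with h | h
  · simp [h, hne, Nat.one_le_iff_ne_zero.mp hm]
  · have : (l:ℤ) - (m:ℤ) ≠ 0 := sub_ne_zero.2 (by exact_mod_cast h)
    simp [h, this, hne]

section helpers
variable {E : Type*} [NormedAddCommGroup E] [InnerProductSpace ℝ E]

lemma normsq_sum (s : Finset ℕ) (a : ℕ → ℝ) (c : ℕ → E) :
    ‖∑ l ∈ s, a l • c l‖^2
      = ∑ l ∈ s, ∑ m ∈ s, (a l * a m) * inner ℝ (c l) (c m) := by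
  rw [← real_inner_self_eq_norm_sq]
  rw [sum_inner]
  refine Finset.sum_congr rfl fun l _ => ?_
  rw [inner_sum]
  refine Finset.sum_congr rfl fun m _ => ?_
  rw [real_inner_smul_left, real_inner_smul_right]
  ring

lemma hasDerivAt_theta (s : Finset ℕ) (c : ℕ → E) (θ : ℝ) :
    HasDerivAt (fun t => ∑ l ∈ s, Real.sin ((l:ℝ) * t / 2) • c l)
      (∑ l ∈ s, (Real.cos ((l:ℝ) * θ / 2) * ((l:ℝ)/2)) • c l) θ := by
  refine HasDerivAt.fun_sum fun l _ => ?_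
  have h1 : HasDerivAt (fun t : ℝ => (l:ℝ) * t / 2) ((l:ℝ)/2) θ := by
    simpa using ((hasDerivAt_id θ).const_mul ((l:ℝ))).div_const 2
  exact ((Real.hasDerivAt_sin ((l:ℝ) * θ / 2)).comp θ h1).smul_const (c l)

lemma hasDerivAt_theta2 (s : Finset ℕ) (c : ℕ → E) (r θ : ℝ) :
    HasDerivAt (fun t => ∑ l ∈ s, (r ^ ((l:ℝ)/2) * Real.sin ((l:ℝ) * t / 2)) • c l)
      (∑ l ∈ s, (r ^ ((l:ℝ)/2) * (Real.cos ((l:ℝ) * θ / 2) * ((l:ℝ)/2))) • c l) θ := by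
  refine HasDerivAt.fun_sum fun l _ => ?_
  have h1 : HasDerivAt (fun t : ℝ => (l:ℝ) * t / 2) ((l:ℝ)/2) θ := by
    simpa using ((hasDerivAt_id θ).const_mul ((l:ℝ))).div_const 2
  exact (((Real.hasDerivAt_sin ((l:ℝ) * θ / 2)).comp θ h1).const_mul
    (r ^ ((l:ℝ)/2))).smul_const (c l)

lemma hasDerivAt_r (s : Finset ℕ) (c : ℕ → E) (r θ : ℝ) (hr : r ≠ 0) :
    HasDerivAt (fun u => ∑ l ∈ s, (u ^ ((l:ℝ)/2) * Real.sin ((l:ℝ) * θ / 2)) • c l)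
      (∑ l ∈ s, (((l:ℝ)/2 * r ^ ((l:ℝ)/2 - 1)) * Real.sin ((l:ℝ) * θ / 2)) • c l) r := by
  refine HasDerivAt.fun_sum fun l _ => ?_
  exact ((Real.hasDerivAt_rpow_const (Or.inl hr)).mul_const
    (Real.sin ((l:ℝ) * θ / 2))).smul_const (c l)

end helpers

lemma part2 {E : Type*} [NormedAddCommGroup E] [InnerProductSpace ℝ E]
    (N : ℕ) (c : ℕ → E) :
    (∫ θ in (0:ℝ)..(2*π),
        ‖∑ l ∈ Finset.Icc 1 N, (Real.cos ((l:ℝ)*θ/2) * ((l:ℝ)/2)) • c l‖^2)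
      = π/4 * ∑ l ∈ Finset.Icc 1 N, (l:ℝ)^2 * ‖c l‖^2 := by
  have step1 : (∫ θ in (0:ℝ)..(2*π),
        ‖∑ l ∈ Finset.Icc 1 N, (Real.cos ((l:ℝ)*θ/2) * ((l:ℝ)/2)) • c l‖^2)
      = ∫ θ in (0:ℝ)..(2*π), ∑ l ∈ Finset.Icc 1 N, ∑ m ∈ Finset.Icc 1 N,
          ((l:ℝ)/2 * ((m:ℝ)/2) * inner ℝ (c l) (c m))
            * (Real.cos ((l:ℝ)*θ/2) * Real.cos ((m:ℝ)*θ/2)) := by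
    refine intervalIntegral.integral_congr fun θ _ => ?_
    rw [normsq_sum]
    refine Finset.sum_congr rfl fun l _ => Finset.sum_congr rfl fun m _ => ?_
    ring
  rw [step1,
    intervalIntegral.integral_finset_sum (fun l _ => (Continuous.intervalIntegrable
      (by fun_prop) 0 (2*π)))]
  have step2 : ∀ l ∈ Finset.Icc 1 N,
      (∫ θ in (0:ℝ)..(2*π), ∑ m ∈ Finset.Icc 1 N,
          ((l:ℝ)/2 * ((m:ℝ)/2) * inner ℝ (c l) (c m))
            * (Real.cos ((l:ℝ)*θ/2) * Real.cos ((m:ℝ)*θ/2)))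
        = ((l:ℝ)/2 * ((l:ℝ)/2) * ‖c l‖^2) * π := by
    intro l hl
    rw [intervalIntegral.integral_finset_sum (fun m _ => (Continuous.intervalIntegrable
      (by fun_prop) 0 (2*π)))]
    have : ∀ m ∈ Finset.Icc 1 N,
        (∫ θ in (0:ℝ)..(2*π), ((l:ℝ)/2 * ((m:ℝ)/2) * inner ℝ (c l) (c m))
            * (Real.cos ((l:ℝ)*θ/2) * Real.cos ((m:ℝ)*θ/2)))
          = if l = m then ((l:ℝ)/2 * ((m:ℝ)/2) * inner ℝ (c l) (c m)) * π else 0 := by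
      intro m hm
      rw [intervalIntegral.integral_const_mul,
        coscos l m (Finset.mem_Icc.mp hl).1 (Finset.mem_Icc.mp hm).1]
      split <;> simp
    rw [Finset.sum_congr rfl this, Finset.sum_ite_eq (Finset.Icc 1 N) l
      (fun m => ((l:ℝ)/2 * ((m:ℝ)/2) * inner ℝ (c l) (c m)) * π), if_pos hl,
      real_inner_self_eq_norm_sq]
  rw [Finset.sum_congr rfl step2, Finset.mul_sum]
  exact Finset.sum_congr rfl fun l _ => by ring


lemma integral_double_sum (s : Finset ℕ) (a b : ℝ) (f : ℕ → ℕ → ℝ → ℝ)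
    (hf : ∀ l ∈ s, ∀ m ∈ s, IntervalIntegrable (f l m) MeasureTheory.volume a b) :
    (∫ x in a..b, ∑ l ∈ s, ∑ m ∈ s, f l m x)
      = ∑ l ∈ s, ∑ m ∈ s, ∫ x in a..b, f l m x := by
  have h' : ∀ l ∈ s, IntervalIntegrable (fun x => ∑ m ∈ s, f l m x)
      MeasureTheory.volume a b := by
    intro l hl
    have h2 := IntervalIntegrable.sum s (fun m hm => hf l hl m hm)
    rwa [Finset.sum_fn] at h2
  exact (intervalIntegral.integral_finset_sum h').trans
    (Finset.sum_congr rfl fun l hl =>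
      intervalIntegral.integral_finset_sum (fun m hm => hf l hl m hm))

set_option maxHeartbeats 1000000 in
lemma part1_inner {E : Type*} [NormedAddCommGroup E] [InnerProductSpace ℝ E]
    (N : ℕ) (c : ℕ → E) (zbar : ℝ → ℝ → E)
    (hzbar : ∀ r θ : ℝ, zbar r θ =
      ∑ l ∈ Finset.Icc 1 N, (r ^ ((l : ℝ) / 2) * Real.sin ((l : ℝ) * θ / 2)) • c l)
    (θ : ℝ) :
    (∫ r in (0:ℝ)..1,
        (‖deriv (fun s => zbar s θ) r‖ ^ 2 + (r ^ 2)⁻¹ * ‖deriv (fun t => zbar r t) θ‖ ^ 2) * r)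
      = ∑ l ∈ Finset.Icc 1 N, ∑ m ∈ Finset.Icc 1 N,
          ((l:ℝ)/2 * ((m:ℝ)/2)
            * (Real.sin ((l:ℝ)*θ/2) * Real.sin ((m:ℝ)*θ/2)
               + Real.cos ((l:ℝ)*θ/2) * Real.cos ((m:ℝ)*θ/2))
            * inner ℝ (c l) (c m)) * (2/((l:ℝ)+(m:ℝ))) := by
  have hG : ∀ r ∈ Set.Ioc (0:ℝ) 1,
      (‖deriv (fun s => zbar s θ) r‖ ^ 2 + (r ^ 2)⁻¹ * ‖deriv (fun t => zbar r t) θ‖ ^ 2) * r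
        = ∑ l ∈ Finset.Icc 1 N, ∑ m ∈ Finset.Icc 1 N,
            ((l:ℝ)/2 * ((m:ℝ)/2)
              * (Real.sin ((l:ℝ)*θ/2) * Real.sin ((m:ℝ)*θ/2)
                 + Real.cos ((l:ℝ)*θ/2) * Real.cos ((m:ℝ)*θ/2))
              * inner ℝ (c l) (c m)) * r ^ (((l:ℝ)+(m:ℝ))/2 - 1) := by
    intro r hr
    have hr0 : 0 < r := hr.1
    have hd1 : deriv (fun s => zbar s θ) r
        = ∑ l ∈ Finset.Icc 1 N, (((l:ℝ)/2 * r ^ ((l:ℝ)/2 - 1)) * Real.sin ((l:ℝ) * θ / 2)) • c l := by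
      have hfe : (fun s => zbar s θ)
          = fun s => ∑ l ∈ Finset.Icc 1 N, (s ^ ((l:ℝ)/2) * Real.sin ((l:ℝ) * θ / 2)) • c l :=
        funext fun s => hzbar s θ
      rw [hfe]
      exact (hasDerivAt_r (Finset.Icc 1 N) c r θ hr0.ne').deriv
    have hd2 : deriv (fun t => zbar r t) θ
        = ∑ l ∈ Finset.Icc 1 N, (r ^ ((l:ℝ)/2) * (Real.cos ((l:ℝ) * θ / 2) * ((l:ℝ)/2))) • c l := by
      have hfe : (fun t => zbar r t)
          = fun t => ∑ l ∈ Finset.Icc 1 N, (r ^ ((l:ℝ)/2) * Real.sin ((l:ℝ) * t / 2)) • c l :=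
        funext fun t => hzbar r t
      rw [hfe]
      exact (hasDerivAt_theta2 (Finset.Icc 1 N) c r θ).deriv
    rw [hd1, hd2, normsq_sum, normsq_sum]
    simp_rw [Finset.mul_sum, ← Finset.sum_add_distrib, Finset.sum_mul]
    refine Finset.sum_congr rfl fun l _ => Finset.sum_congr rfl fun m _ => ?_
    have e1 : r ^ ((l:ℝ)/2 - 1) * r ^ ((m:ℝ)/2 - 1) * r = r ^ (((l:ℝ)+(m:ℝ))/2 - 1) := by
      rw [← Real.rpow_add hr0, ← Real.rpow_add_one hr0.ne']
      congr 1; ring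
    have e2 : (r^2)⁻¹ * (r ^ ((l:ℝ)/2) * r ^ ((m:ℝ)/2) * r) = r ^ (((l:ℝ)+(m:ℝ))/2 - 1) := by
      have h3 : r ^ ((l:ℝ)/2) * r ^ ((m:ℝ)/2) * r = r ^ (((l:ℝ)+(m:ℝ))/2 - 1) * r^2 := by
        rw [← Real.rpow_add hr0, ← Real.rpow_add_one hr0.ne',
          show ((l:ℝ)/2 + (m:ℝ)/2 + 1) = (((l:ℝ)+(m:ℝ))/2 - 1) + 2 by ring,
          Real.rpow_add hr0, Real.rpow_two]
      rw [h3]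
      field_simp
    linear_combination
      (((l:ℝ)/2) * ((m:ℝ)/2) * Real.sin ((l:ℝ)*θ/2) * Real.sin ((m:ℝ)*θ/2)
        * (inner ℝ (c l) (c m) : ℝ)) * e1
      + (((l:ℝ)/2) * ((m:ℝ)/2) * Real.cos ((l:ℝ)*θ/2) * Real.cos ((m:ℝ)*θ/2)
        * (inner ℝ (c l) (c m) : ℝ)) * e2
  rw [intervalIntegral.integral_congr_ae (g := fun r =>
      ∑ l ∈ Finset.Icc 1 N, ∑ m ∈ Finset.Icc 1 N,
        ((l:ℝ)/2 * ((m:ℝ)/2)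
          * (Real.sin ((l:ℝ)*θ/2) * Real.sin ((m:ℝ)*θ/2)
             + Real.cos ((l:ℝ)*θ/2) * Real.cos ((m:ℝ)*θ/2))
          * inner ℝ (c l) (c m)) * r ^ (((l:ℝ)+(m:ℝ))/2 - 1))
    (Filter.Eventually.of_forall fun r hr => hG r (by
      rwa [Set.uIoc_of_le (by positivity : (0:ℝ) ≤ 1)] at hr))]
  have hint : ∀ (l m : ℕ), 1 ≤ l → IntervalIntegrable
      (fun r : ℝ => ((l:ℝ)/2 * ((m:ℝ)/2)
          * (Real.sin ((l:ℝ)*θ/2) * Real.sin ((m:ℝ)*θ/2)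
             + Real.cos ((l:ℝ)*θ/2) * Real.cos ((m:ℝ)*θ/2))
          * inner ℝ (c l) (c m)) * r ^ (((l:ℝ)+(m:ℝ))/2 - 1)) MeasureTheory.volume 0 1 := by
    intro l m hl
    have h1 : (1:ℝ) ≤ (l:ℝ) := by exact_mod_cast hl
    have h2 : (0:ℝ) ≤ (m:ℝ) := Nat.cast_nonneg m
    exact (intervalIntegral.intervalIntegrable_rpow'
      (by linarith : (-1:ℝ) < ((l:ℝ)+(m:ℝ))/2 - 1)).const_mul _
  rw [integral_double_sum (Finset.Icc 1 N) 0 1 _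
    (fun l hl m _ => hint l m (Finset.mem_Icc.mp hl).1)]
  refine Finset.sum_congr rfl fun l hl => Finset.sum_congr rfl fun m hm => ?_
  have h1 : (1:ℝ) ≤ (l:ℝ) := by exact_mod_cast (Finset.mem_Icc.mp hl).1
  have h2 : (1:ℝ) ≤ (m:ℝ) := by exact_mod_cast (Finset.mem_Icc.mp hm).1
  rw [intervalIntegral.integral_const_mul,
    integral_rpow (Or.inl (by linarith : (-1:ℝ) < ((l:ℝ)+(m:ℝ))/2 - 1))]
  have he : (((l:ℝ)+(m:ℝ))/2 - 1) + 1 = ((l:ℝ)+(m:ℝ))/2 := by ring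
  rw [he, Real.one_rpow, Real.zero_rpow (by intro h; rw [div_eq_zero_iff] at h; rcases h with h | h <;> linarith)]
  congr 1
  field_simp
  norm_num

lemma part1_outer {E : Type*} [NormedAddCommGroup E] [InnerProductSpace ℝ E]
    (N : ℕ) (c : ℕ → E) :
    (∫ θ in (0:ℝ)..(2*π), ∑ l ∈ Finset.Icc 1 N, ∑ m ∈ Finset.Icc 1 N,
        ((l:ℝ)/2 * ((m:ℝ)/2)
          * (Real.sin ((l:ℝ)*θ/2) * Real.sin ((m:ℝ)*θ/2)
             + Real.cos ((l:ℝ)*θ/2) * Real.cos ((m:ℝ)*θ/2))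
          * inner ℝ (c l) (c m)) * (2/((l:ℝ)+(m:ℝ))))
      = π/2 * ∑ l ∈ Finset.Icc 1 N, (l:ℝ) * ‖c l‖^2 := by
  rw [integral_double_sum (Finset.Icc 1 N) 0 (2*π) _
    (fun l _ m _ => Continuous.intervalIntegrable (by fun_prop) 0 (2*π))]
  have key : ∀ l ∈ Finset.Icc 1 N, ∀ m ∈ Finset.Icc 1 N,
      (∫ θ in (0:ℝ)..(2*π),
        ((l:ℝ)/2 * ((m:ℝ)/2)
          * (Real.sin ((l:ℝ)*θ/2) * Real.sin ((m:ℝ)*θ/2)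
             + Real.cos ((l:ℝ)*θ/2) * Real.cos ((m:ℝ)*θ/2))
          * inner ℝ (c l) (c m)) * (2/((l:ℝ)+(m:ℝ))))
      = if l = m then
          ((l:ℝ)/2 * ((m:ℝ)/2) * (inner ℝ (c l) (c m) : ℝ) * (2/((l:ℝ)+(m:ℝ)))) * (2*π)
        else 0 := by
    intro l hl m hm
    have e : ∀ θ : ℝ, ((l:ℝ)/2 * ((m:ℝ)/2)
          * (Real.sin ((l:ℝ)*θ/2) * Real.sin ((m:ℝ)*θ/2)
             + Real.cos ((l:ℝ)*θ/2) * Real.cos ((m:ℝ)*θ/2))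
          * inner ℝ (c l) (c m)) * (2/((l:ℝ)+(m:ℝ)))
        = ((l:ℝ)/2 * ((m:ℝ)/2) * (inner ℝ (c l) (c m) : ℝ) * (2/((l:ℝ)+(m:ℝ))))
            * (Real.sin ((l:ℝ)*θ/2) * Real.sin ((m:ℝ)*θ/2)
               + Real.cos ((l:ℝ)*θ/2) * Real.cos ((m:ℝ)*θ/2)) := fun θ => by ring
    rw [intervalIntegral.integral_congr (fun θ _ => e θ),
      intervalIntegral.integral_const_mul,
      intervalIntegral.integral_add
        (Continuous.intervalIntegrable (by fun_prop) 0 (2*π))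
        (Continuous.intervalIntegrable (by fun_prop) 0 (2*π)),
      sinsin l m (Finset.mem_Icc.mp hl).1 (Finset.mem_Icc.mp hm).1,
      coscos l m (Finset.mem_Icc.mp hl).1 (Finset.mem_Icc.mp hm).1]
    split
    · ring
    · simp
  rw [Finset.sum_congr rfl (fun l hl => Finset.sum_congr rfl (fun m hm => key l hl m hm))]
  rw [Finset.sum_congr rfl (fun l hl => Finset.sum_ite_eq (Finset.Icc 1 N) l
    (fun m => ((l:ℝ)/2 * ((m:ℝ)/2) * (inner ℝ (c l) (c m) : ℝ) * (2/((l:ℝ)+(m:ℝ)))) * (2*π)))]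
  rw [Finset.mul_sum]
  refine Finset.sum_congr rfl fun l hl => ?_
  rw [if_pos hl, real_inner_self_eq_norm_sq]
  have hl1 : (1:ℝ) ≤ (l:ℝ) := by exact_mod_cast (Finset.mem_Icc.mp hl).1
  have : (l:ℝ) ≠ 0 := by linarith
  field_simp
  ring

/-- Energy of the half-integer-mode extension to the slit disk: for
`ζ(θ) = Σ_{l=1}^N c_l sin(lθ/2)` and `ζ̄(r,θ) = Σ_{l=1}^N r^{l/2} c_l sin(lθ/2)`, the Dirichlet
energy of `ζ̄` in polar coordinates equals `(π/2) Σ l ‖c_l‖²`, while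
`∫₀^{2π} ‖ζ'‖² = (π/4) Σ l² ‖c_l‖²`; in particular the energy of `ζ̄` is at most
`2 ∫₀^{2π} ‖ζ'‖²`. -/
theorem statement10 {n : ℕ} (hn : 1 ≤ n) (N : ℕ) (hN : 1 ≤ N)
    (c : ℕ → EuclideanSpace ℝ (Fin n))
    (ζ : ℝ → EuclideanSpace ℝ (Fin n))
    (hζ : ∀ θ : ℝ, ζ θ = ∑ l ∈ Finset.Icc 1 N, Real.sin ((l : ℝ) * θ / 2) • c l)
    (zbar : ℝ → ℝ → EuclideanSpace ℝ (Fin n))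
    (hzbar : ∀ r θ : ℝ, zbar r θ =
      ∑ l ∈ Finset.Icc 1 N, (r ^ ((l : ℝ) / 2) * Real.sin ((l : ℝ) * θ / 2)) • c l) :
    (∫ θ in (0:ℝ)..(2 * π), ∫ r in (0:ℝ)..1,
        (‖deriv (fun s => zbar s θ) r‖ ^ 2 + (r ^ 2)⁻¹ * ‖deriv (fun t => zbar r t) θ‖ ^ 2) * r)
      = π / 2 * ∑ l ∈ Finset.Icc 1 N, (l : ℝ) * ‖c l‖ ^ 2 ∧
    (∫ θ in (0:ℝ)..(2 * π), ‖deriv ζ θ‖ ^ 2)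
      = π / 4 * ∑ l ∈ Finset.Icc 1 N, (l : ℝ) ^ 2 * ‖c l‖ ^ 2 ∧
    (∫ θ in (0:ℝ)..(2 * π), ∫ r in (0:ℝ)..1,
        (‖deriv (fun s => zbar s θ) r‖ ^ 2 + (r ^ 2)⁻¹ * ‖deriv (fun t => zbar r t) θ‖ ^ 2) * r)
      ≤ 2 * ∫ θ in (0:ℝ)..(2 * π), ‖deriv ζ θ‖ ^ 2 := by
  have hζd : ∀ θ : ℝ, deriv ζ θ
      = ∑ l ∈ Finset.Icc 1 N, (Real.cos ((l:ℝ)*θ/2) * ((l:ℝ)/2)) • c l := by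
    intro θ
    rw [funext hζ]
    exact (hasDerivAt_theta (Finset.Icc 1 N) c θ).deriv
  have h2 : (∫ θ in (0:ℝ)..(2 * π), ‖deriv ζ θ‖ ^ 2)
      = π / 4 * ∑ l ∈ Finset.Icc 1 N, (l : ℝ) ^ 2 * ‖c l‖ ^ 2 := by
    have e : (∫ θ in (0:ℝ)..(2 * π), ‖deriv ζ θ‖ ^ 2)
        = ∫ θ in (0:ℝ)..(2 * π),
            ‖∑ l ∈ Finset.Icc 1 N, (Real.cos ((l:ℝ)*θ/2) * ((l:ℝ)/2)) • c l‖ ^ 2 :=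
      intervalIntegral.integral_congr fun θ _ => by rw [hζd θ]
    rw [e]
    exact part2 N c
  have h1 : (∫ θ in (0:ℝ)..(2 * π), ∫ r in (0:ℝ)..1,
        (‖deriv (fun s => zbar s θ) r‖ ^ 2 + (r ^ 2)⁻¹ * ‖deriv (fun t => zbar r t) θ‖ ^ 2) * r)
      = π / 2 * ∑ l ∈ Finset.Icc 1 N, (l : ℝ) * ‖c l‖ ^ 2 := by
    have e : (∫ θ in (0:ℝ)..(2 * π), ∫ r in (0:ℝ)..1,
        (‖deriv (fun s => zbar s θ) r‖ ^ 2 + (r ^ 2)⁻¹ * ‖deriv (fun t => zbar r t) θ‖ ^ 2) * r)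
        = ∫ θ in (0:ℝ)..(2 * π), ∑ l ∈ Finset.Icc 1 N, ∑ m ∈ Finset.Icc 1 N,
            ((l:ℝ)/2 * ((m:ℝ)/2)
              * (Real.sin ((l:ℝ)*θ/2) * Real.sin ((m:ℝ)*θ/2)
                 + Real.cos ((l:ℝ)*θ/2) * Real.cos ((m:ℝ)*θ/2))
              * inner ℝ (c l) (c m)) * (2/((l:ℝ)+(m:ℝ))) :=
      intervalIntegral.integral_congr fun θ _ => part1_inner N c zbar hzbar θ
    rw [e]
    exact part1_outer N c
  refine ⟨h1, h2, ?_⟩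
  rw [h1, h2, show (2:ℝ) * (π / 4 * ∑ l ∈ Finset.Icc 1 N, (l : ℝ) ^ 2 * ‖c l‖ ^ 2)
    = π / 2 * ∑ l ∈ Finset.Icc 1 N, (l : ℝ) ^ 2 * ‖c l‖ ^ 2 by ring]
  refine mul_le_mul_of_nonneg_left (Finset.sum_le_sum fun l hl => ?_)
    (by positivity : (0:ℝ) ≤ π / 2)
  have hl1 : (1:ℝ) ≤ (l:ℝ) := by exact_mod_cast (Finset.mem_Icc.mp hl).1
  have : (l:ℝ) ≤ (l:ℝ)^2 := by nlinarith
  exact mul_le_mul_of_nonneg_right this (by positivity)
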